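/- Let L be a finite-dimensional simple Lie superalgebra over an algebraically closed field F of characteristic not 2. Then every linear super-commuting map f on L is a scalar multiplication: there exists λ ∈ F with f(x) = λx for all x ∈ L. -/

import Mathlib

universe u v

def sSign (F : Type u) [Field F] (a b : Bool) : F := if a && b then -1 else 1

structure LieSuperAlgebra (F : Type u) (L : Type v) [Field F] [AddCommGroup L]
    [Module F L] where
  br : L →ₗ[F] L →ₗ[F] L
  grade : Bool → Submodule F L
  sup_eq_top : grade false ⊔ grade true = ⊤
  inf_eq_bot : grade false ⊓ grade true = ⊥
  br_mem : ∀ a b x y, x ∈ grade a → y ∈ grade b → br x y ∈ grade (xor a b)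
  super_skew : ∀ a b x y, x ∈ grade a → y ∈ grade b →
    br x y = - sSign F a b • br y x
  super_jacobi : ∀ a b x y z, x ∈ grade a → y ∈ grade b →
    br x (br y z) = br (br x y) z + sSign F a b • br y (br x z)

variable {F : Type u} {L : Type v} [Field F] [AddCommGroup L] [Module F L]

namespace LieSuperAlgebra

/-- A graded ideal: closed under bracketing with arbitrary elements, and
spanned by its homogeneous parts. -/
def IsGradedIdeal (A : LieSuperAlgebra F L) (I : Submodule F L) : Prop :=
  (∀ x y, y ∈ I → A.br x y ∈ I) ∧ I = (I ⊓ A.grade false) ⊔ (I ⊓ A.grade true)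

/-- Simplicity: no graded ideals other than 0 and L, and nonabelian. -/
def IsSimple (A : LieSuperAlgebra F L) : Prop :=
  (∀ I : Submodule F L, A.IsGradedIdeal I → I = ⊥ ∨ I = ⊤) ∧ ∃ x y, A.br x y ≠ 0

def IsEven (A : LieSuperAlgebra F L) (f : L →ₗ[F] L) : Prop :=
  ∀ a x, x ∈ A.grade a → f x ∈ A.grade a

def IsOdd (A : LieSuperAlgebra F L) (f : L →ₗ[F] L) : Prop :=
  ∀ a x, x ∈ A.grade a → f x ∈ A.grade (!a)

/-- Even centroid condition: f([x,y]) = [f x, y] = [x, f y]. -/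
def InEvenCentroid (A : LieSuperAlgebra F L) (f : L →ₗ[F] L) : Prop :=
  A.IsEven f ∧ ∀ x y, f (A.br x y) = A.br (f x) y ∧ f (A.br x y) = A.br x (f y)

/-- Odd centroid condition: f([x,y]) = [f x, y] = (-1)^{|x|}[x, f y]. -/
def InOddCentroid (A : LieSuperAlgebra F L) (f : L →ₗ[F] L) : Prop :=
  A.IsOdd f ∧ ∀ a x y, x ∈ A.grade a →
    f (A.br x y) = A.br (f x) y ∧ f (A.br x y) = sSign F a true • A.br x (f y)

/-- Membership in the centroid for a homogeneous map of parity `p`: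
`f ∘ ad x = (-1)^{|f||x|} ad x ∘ f` for all homogeneous `x`. -/
def InCentroid (A : LieSuperAlgebra F L) (p : Bool) (f : L →ₗ[F] L) : Prop :=
  (∀ a x, x ∈ A.grade a → f x ∈ A.grade (xor a p)) ∧
  ∀ a x y, x ∈ A.grade a → f (A.br x y) = sSign F p a • A.br x (f y)

/-- A homogeneous skew-supersymmetric super-biderivation of parity `p`. -/
def IsSuperBiderivation (A : LieSuperAlgebra F L) (p : Bool)
    (φ : L →ₗ[F] L →ₗ[F] L) : Prop :=
  (∀ a b x y, x ∈ A.grade a → y ∈ A.grade b →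
      φ x y ∈ A.grade (xor (xor a b) p)) ∧
  (∀ a b x y, x ∈ A.grade a → y ∈ A.grade b →
      φ x y = - sSign F a b • φ y x) ∧
  (∀ a b x y z, x ∈ A.grade a → y ∈ A.grade b →
      φ x (A.br y z) = A.br (φ x y) z + sSign F (xor p a) b • A.br y (φ x z))

end LieSuperAlgebra

open Polynomial

namespace LieSuperAlgebra

-- scratch versions of aux lemmas
lemma decompose (A : LieSuperAlgebra F L) (x : L) :
    ∃ x0 x1, x0 ∈ A.grade false ∧ x1 ∈ A.grade true ∧ x = x0 + x1 := by
  have hx : x ∈ A.grade false ⊔ A.grade true := by rw [A.sup_eq_top]; trivial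
  rcases Submodule.mem_sup.mp hx with ⟨x0, h0, x1, h1, hsum⟩
  exact ⟨x0, x1, h0, h1, hsum.symm⟩

lemma direct0 (A : LieSuperAlgebra F L) {u v : L}
    (hu : u ∈ A.grade false) (hv : v ∈ A.grade true) (h : u + v = 0) :
    u = 0 ∧ v = 0 := by
  have huv : u = -v := eq_neg_of_add_eq_zero_left h
  have hmem : u ∈ A.grade false ⊓ A.grade true :=
    ⟨hu, by rw [huv]; exact neg_mem hv⟩
  rw [A.inf_eq_bot] at hmem
  have hu0 : u = 0 := hmem
  refine ⟨hu0, ?_⟩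
  rw [hu0, zero_add] at h; exact h

lemma directa (A : LieSuperAlgebra F L) (a : Bool) {u v : L}
    (hu : u ∈ A.grade a) (hv : v ∈ A.grade (!a)) (h : u + v = 0) :
    u = 0 ∧ v = 0 := by
  cases a
  · exact A.direct0 hu hv h
  · have := A.direct0 hv hu (by rw [add_comm]; exact h)
    exact ⟨this.2, this.1⟩

lemma br_add_left (A : LieSuperAlgebra F L) (u v w : L) :
    A.br (u + v) w = A.br u w + A.br v w := by
  rw [map_add]; rfl

def centerS (A : LieSuperAlgebra F L) : Submodule F L where
  carrier := {c | ∀ x, A.br x c = 0}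
  add_mem' := by
    intro p q hp hq x
    rw [map_add, hp x, hq x, add_zero]
  zero_mem' := by intro x; exact map_zero _
  smul_mem' := by
    intro r p hp x
    rw [map_smul, hp x, smul_zero]

lemma central_eq_zero (A : LieSuperAlgebra F L) (hA : A.IsSimple) {c : L}
    (hc : ∀ x, A.br x c = 0) : c = 0 := by
  have hgraded : A.centerS = (A.centerS ⊓ A.grade false) ⊔ (A.centerS ⊓ A.grade true) := by
    refine le_antisymm ?_ (sup_le inf_le_left inf_le_left)
    intro z hz
    obtain ⟨z0, z1, h0, h1, rfl⟩ := A.decompose z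
    have key : ∀ (b : Bool) (x : L), x ∈ A.grade b → A.br x z0 = 0 ∧ A.br x z1 = 0 := by
      intro b x hx
      have hsum : A.br x z0 + A.br x z1 = 0 := by
        rw [← map_add]; exact hz x
      have m0 : A.br x z0 ∈ A.grade b := by
        have := A.br_mem b false x z0 hx h0; simpa using this
      have m1 : A.br x z1 ∈ A.grade (!b) := by
        have := A.br_mem b true x z1 hx h1; simpa using this
      exact A.directa b m0 m1 hsum
    have hz0 : z0 ∈ A.centerS := by
      intro x
      obtain ⟨u, v, hu, hv, rfl⟩ := A.decompose x
      rw [A.br_add_left, (key false u hu).1, (key true v hv).1, add_zero]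
    have hz1 : z1 ∈ A.centerS := by
      intro x
      obtain ⟨u, v, hu, hv, rfl⟩ := A.decompose x
      rw [A.br_add_left, (key false u hu).2, (key true v hv).2, add_zero]
    exact Submodule.add_mem_sup ⟨hz0, h0⟩ ⟨hz1, h1⟩
  have hideal : ∀ x y, y ∈ A.centerS → A.br x y ∈ A.centerS := by
    intro x y hy
    rw [hy x]; exact (A.centerS).zero_mem
  rcases hA.1 A.centerS ⟨hideal, hgraded⟩ with hbot | htop
  · have : c ∈ A.centerS := hc
    rw [hbot] at this; exact this
  · obtain ⟨x, y, hxy⟩ := hA.2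
    exfalso
    have hy : y ∈ A.centerS := htop ▸ Submodule.mem_top
    exact hxy (hy x)


/-- Even super-commuting map. -/
def Good (A : LieSuperAlgebra F L) (g : L →ₗ[F] L) : Prop :=
  (∀ a x, x ∈ A.grade a → g x ∈ A.grade a) ∧
  (∀ x y, A.br (g x) y = A.br x (g y))

section SqZero

variable (A : LieSuperAlgebra F L) {g : L →ₗ[F] L}

/-- the sign-chain identity: if g is good and g∘g = 0 then [gu,[gx,y]] = 0 for homogeneous. -/
lemma chain_zero (h2 : (2:F) ≠ 0) (hg : A.Good g) (hgg : ∀ w, g (g w) = 0)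
    {a b c : Bool} {u x y : L} (hu : u ∈ A.grade a) (hx : x ∈ A.grade b)
    (hy : y ∈ A.grade c) :
    A.br (g u) (A.br (g x) y) = 0 := by
  have hgu := hg.1 a u hu
  have hgx := hg.1 b x hx
  have hgy := hg.1 c y hy
  have bz : ∀ p q : L, A.br (g p) (g q) = 0 := by
    intro p q; rw [hg.2 p (g q), hgg q, map_zero]
  have e1 : A.br (g u) (A.br (g x) y) = A.br (A.br (g u) x) (g y) := by
    rw [hg.2 x y, A.super_jacobi a b (g u) x (g y) hgu hx, bz u y, map_zero,
      smul_zero, add_zero]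
  have e2 : A.br (A.br (g u) x) (g y)
      = - sSign F (xor a b) c • A.br (g y) (A.br (g u) x) :=
    A.super_skew (xor a b) c _ _ (A.br_mem a b _ _ hgu hx) hgy
  have e3 : A.br (g y) (A.br (g u) x) = A.br (A.br (g y) u) (g x) := by
    rw [hg.2 u x, A.super_jacobi c a (g y) u (g x) hgy hu, bz y x, map_zero,
      smul_zero, add_zero]
  have e4 : A.br (A.br (g y) u) (g x)
      = - sSign F (xor c a) b • A.br (g x) (A.br (g y) u) :=
    A.super_skew (xor c a) b _ _ (A.br_mem c a _ _ hgy hu) hgx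
  have e5 : A.br (g x) (A.br (g y) u) = A.br (A.br (g x) y) (g u) := by
    rw [hg.2 y u, A.super_jacobi b c (g x) y (g u) hgx hy, bz x u, map_zero,
      smul_zero, add_zero]
  have e6 : A.br (A.br (g x) y) (g u)
      = - sSign F (xor b c) a • A.br (g u) (A.br (g x) y) :=
    A.super_skew (xor b c) a _ _ (A.br_mem b c _ _ hgx hy) hgu
  have ecomb : A.br (g u) (A.br (g x) y) = ((- sSign F (xor a b) c) *
      ((- sSign F (xor c a) b) * (- sSign F (xor b c) a))) •
      A.br (g u) (A.br (g x) y) := by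
    calc A.br (g u) (A.br (g x) y)
        = A.br (A.br (g u) x) (g y) := e1
      _ = - sSign F (xor a b) c • A.br (g y) (A.br (g u) x) := e2
      _ = - sSign F (xor a b) c • A.br (A.br (g y) u) (g x) := by rw [e3]
      _ = - sSign F (xor a b) c •
            (- sSign F (xor c a) b • A.br (g x) (A.br (g y) u)) := by rw [e4]
      _ = - sSign F (xor a b) c •
            (- sSign F (xor c a) b • A.br (A.br (g x) y) (g u)) := by rw [e5]
      _ = - sSign F (xor a b) c • (- sSign F (xor c a) b •
            (- sSign F (xor b c) a • A.br (g u) (A.br (g x) y))) := by rw [e6]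
      _ = ((- sSign F (xor a b) c) * ((- sSign F (xor c a) b) *
            (- sSign F (xor b c) a))) • A.br (g u) (A.br (g x) y) := by
          rw [smul_smul, smul_smul, mul_assoc]
  have hcoef : ((- sSign F (xor a b) c) * ((- sSign F (xor c a) b) *
      (- sSign F (xor b c) a))) = -1 := by
    cases a <;> cases b <;> cases c <;> norm_num [sSign]
  rw [hcoef, neg_one_smul] at ecomb
  have h2G : (2:F) • A.br (g u) (A.br (g x) y) = 0 := by
    rw [two_smul]
    nth_rewrite 1 [ecomb]
    exact neg_add_cancel _
  exact (smul_eq_zero.mp h2G).resolve_left h2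

/-- extension over the last argument -/
lemma chain_zero' (h2 : (2:F) ≠ 0) (hg : A.Good g) (hgg : ∀ w, g (g w) = 0)
    {a b : Bool} {u x : L} (hu : u ∈ A.grade a) (hx : x ∈ A.grade b) (y : L) :
    A.br (g u) (A.br (g x) y) = 0 := by
  obtain ⟨y0, y1, hy0, hy1, rfl⟩ := A.decompose y
  rw [map_add, map_add, A.chain_zero h2 hg hgg hu hx hy0,
    A.chain_zero h2 hg hgg hu hx hy1, add_zero]

lemma good_sq_zero (hA : A.IsSimple) (h2 : (2:F) ≠ 0) (hg : A.Good g)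
    (hgg : ∀ w, g (g w) = 0) : ∀ w, g w = 0 := by
  set R : Submodule F L :=
    Submodule.span F {w | ∃ (a : Bool) (x y : L), x ∈ A.grade a ∧ w = A.br (g x) y}
    with hR
  -- the E-derivation: br z (br (g x) y) ∈ R for homogeneous z x
  have Ederiv : ∀ {a b : Bool} {z x : L}, z ∈ A.grade a → x ∈ A.grade b → ∀ y : L,
      A.br z (A.br (g x) y) ∈ R := by
    intro a b z x hz hx y
    have hgx := hg.1 b x hx
    have hgz := hg.1 a z hz
    set s := sSign F a b with hs
    have eqA : A.br z (A.br (g x) y)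
        = A.br (g (A.br z x)) y + s • A.br x (A.br (g z) y) := by
      rw [hg.2 x y, A.super_jacobi a b z x (g y) hz hx, hg.2 (A.br z x) y,
        ← hg.2 z y]
    have eqB : A.br z (A.br (g x) y)
        = (A.br (g z) (A.br x y) - s • A.br x (A.br (g z) y))
          + s • A.br (g x) (A.br z y) := by
      have jac1 : A.br z (A.br (g x) y)
          = A.br (A.br z (g x)) y + s • A.br (g x) (A.br z y) :=
        A.super_jacobi a b z (g x) y hz hgx
      have jac2 : A.br (g z) (A.br x y)
          = A.br (A.br (g z) x) y + s • A.br x (A.br (g z) y) :=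
        A.super_jacobi a b (g z) x y hgz hx
      rw [jac1, ← hg.2 z x]
      rw [eq_sub_iff_add_eq.mpr jac2.symm]
    have h1 : A.br (g (A.br z x)) y ∈ R :=
      Submodule.subset_span ⟨xor a b, A.br z x, y, A.br_mem a b z x hz hx, rfl⟩
    have h2' : A.br (g z) (A.br x y) ∈ R :=
      Submodule.subset_span ⟨a, z, A.br x y, hz, rfl⟩
    have h3 : A.br (g x) (A.br z y) ∈ R :=
      Submodule.subset_span ⟨b, x, A.br z y, hx, rfl⟩
    have key : (2:F) • (A.br z (A.br (g x) y))
        = A.br (g (A.br z x)) y + A.br (g z) (A.br x y) + s • A.br (g x) (A.br z y) := by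
      rw [two_smul]
      nth_rewrite 1 [eqA]
      nth_rewrite 1 [eqB]
      abel
    have hmem : (2:F) • (A.br z (A.br (g x) y)) ∈ R := by
      rw [key]
      exact add_mem (add_mem h1 h2') (Submodule.smul_mem _ _ h3)
    have := Submodule.smul_mem R (2:F)⁻¹ hmem
    rwa [smul_smul, inv_mul_cancel₀ h2, one_smul] at this
  -- R is a graded ideal
  have hRideal : ∀ z w, w ∈ R → A.br z w ∈ R := by
    intro z w hw
    obtain ⟨z0, z1, hz0, hz1, rfl⟩ := A.decompose z
    rw [A.br_add_left]
    have hcomap : ∀ {c : Bool} {zc : L}, zc ∈ A.grade c →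
        R ≤ Submodule.comap (A.br zc) R := by
      intro c zc hzc
      rw [hR]
      refine Submodule.span_le.mpr ?_
      rintro w' ⟨a', x', y', hx', rfl⟩
      exact Ederiv hzc hx' y'
    exact add_mem (hcomap hz0 hw) (hcomap hz1 hw)
  have hpiece : ∀ (w : L) (c : Bool), w ∈ A.grade c → w ∈ R →
      w ∈ (R ⊓ A.grade false) ⊔ (R ⊓ A.grade true) := by
    intro w c hwc hwR
    cases c
    · exact Submodule.mem_sup_left ⟨hwR, hwc⟩
    · exact Submodule.mem_sup_right ⟨hwR, hwc⟩
  have hRgraded : R = (R ⊓ A.grade false) ⊔ (R ⊓ A.grade true) := by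
    refine le_antisymm ?_ (sup_le inf_le_left inf_le_left)
    rw [hR]
    refine Submodule.span_le.mpr ?_
    rintro w ⟨a', x', y', hx', rfl⟩
    obtain ⟨y0, y1, hy0, hy1, rfl⟩ := A.decompose y'
    rw [map_add]
    refine add_mem ?_ ?_
    · refine hpiece _ (xor a' false) (A.br_mem a' false _ _ (hg.1 a' x' hx') hy0)
        (Submodule.subset_span ⟨a', x', y0, hx', rfl⟩)
    · refine hpiece _ (xor a' true) (A.br_mem a' true _ _ (hg.1 a' x' hx') hy1)
        (Submodule.subset_span ⟨a', x', y1, hx', rfl⟩)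
  rcases hA.1 R ⟨hRideal, hRgraded⟩ with hbot | htop
  · -- all generators are zero
    have hgen : ∀ {a : Bool} {x : L}, x ∈ A.grade a → ∀ y, A.br (g x) y = 0 := by
      intro a x hx y
      have : A.br (g x) y ∈ R := Submodule.subset_span ⟨a, x, y, hx, rfl⟩
      rw [hbot] at this; exact this
    intro w
    refine A.central_eq_zero hA ?_
    intro z
    rw [← hg.2 z w]
    obtain ⟨z0, z1, hz0, hz1, rfl⟩ := A.decompose z
    rw [map_add, A.br_add_left, hgen hz0 w, hgen hz1 w, add_zero]
  · -- br (g z) kills everything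
    have hkill : ∀ {c : Bool} {z : L}, z ∈ A.grade c → ∀ w, A.br (g z) w = 0 := by
      intro c z hzc w
      have hle : R ≤ LinearMap.ker (A.br (g z)) := by
        rw [hR]
        refine Submodule.span_le.mpr ?_
        rintro w' ⟨a', x', y', hx', rfl⟩
        exact A.chain_zero' h2 hg hgg hzc hx' y'
      have : w ∈ R := htop ▸ Submodule.mem_top
      exact hle this
    intro w
    refine A.central_eq_zero hA ?_
    intro z
    rw [← hg.2 z w]
    obtain ⟨z0, z1, hz0, hz1, rfl⟩ := A.decompose z
    rw [map_add, A.br_add_left, hkill hz0 w, hkill hz1 w, add_zero]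

end SqZero

section Idem

variable (A : LieSuperAlgebra F L) {e : L →ₗ[F] L}

lemma good_idem (hA : A.IsSimple) (he : A.Good e)
    (hidem : ∀ x, e (e x) = e x) :
    (∀ x, e x = 0) ∨ (∀ x, e x = x) := by
  -- basic vanishing lemmas
  have h8a : ∀ {b : L}, e b = 0 → ∀ v, A.br b (e v) = 0 := by
    intro b hb v
    rw [← he.2 b v, hb]
    rw [map_zero, LinearMap.zero_apply]
  have h8b : ∀ {b : L}, e b = 0 → ∀ v, A.br (e v) b = 0 := by
    intro b hb v
    rw [he.2 v b, hb, map_zero]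
  -- kernel is graded
  have hkg : ∀ {b : L}, e b = 0 → ∃ b0 b1, b0 ∈ A.grade false ∧ b1 ∈ A.grade true ∧
      e b0 = 0 ∧ e b1 = 0 ∧ b = b0 + b1 := by
    intro b hb
    obtain ⟨b0, b1, h0, h1, rfl⟩ := A.decompose b
    have hsum : e b0 + e b1 = 0 := by rw [← map_add]; exact hb
    have := A.directa false (he.1 false b0 h0) (by simpa using he.1 true b1 h1) hsum
    exact ⟨b0, b1, h0, h1, this.1, this.2, rfl⟩
  -- 8c : ker kills [A,A]
  have h8c : ∀ {b : L}, e b = 0 → ∀ x y, A.br b (A.br (e x) (e y)) = 0 := by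
    intro b hb x y
    obtain ⟨b0, b1, hb0, hb1, hb0z, hb1z, rfl⟩ := hkg hb
    obtain ⟨x0, x1, hx0, hx1, rfl⟩ := A.decompose x
    have hsplit : A.br (e (x0 + x1)) (e y) = A.br (e x0) (e y) + A.br (e x1) (e y) := by
      rw [map_add, A.br_add_left]
    have hpt : ∀ (i j : Bool) (bi xj : L), bi ∈ A.grade i → e bi = 0 →
        xj ∈ A.grade j → A.br bi (A.br (e xj) (e y)) = 0 := by
      intro i j bi xj hbi hbiz hxj
      rw [A.super_jacobi i j bi (e xj) (e y) hbi (he.1 j xj hxj),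
        h8a hbiz xj, h8a hbiz y]
      rw [map_zero, LinearMap.zero_apply, map_zero, smul_zero, add_zero]
    rw [A.br_add_left, hsplit, map_add, map_add,
      hpt false false b0 x0 hb0 hb0z hx0, hpt false true b0 x1 hb0 hb0z hx1,
      hpt true false b1 x0 hb1 hb1z hx0, hpt true true b1 x1 hb1 hb1z hx1]
    simp
  -- the ideal I
  set S : Submodule F L := Submodule.span F {w | ∃ x y, w = A.br (e x) (e y)} with hS
  set I : Submodule F L := LinearMap.range e ⊔ S with hI
  have hker_sub : ∀ (z : L), e (z - e z) = 0 := by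
    intro z; rw [map_sub, hidem, sub_self]
  have hbrS : ∀ {b : L}, e b = 0 → ∀ w ∈ S, A.br b w = 0 := by
    intro b hb w hw
    have hle : S ≤ LinearMap.ker (A.br b) := by
      rw [hS]
      refine Submodule.span_le.mpr ?_
      rintro w' ⟨x, y, rfl⟩
      exact h8c hb x y
    exact hle hw
  have hIideal : ∀ z w, w ∈ I → A.br z w ∈ I := by
    intro z w hw
    rw [hI] at hw
    obtain ⟨p, hp, s, hs, rfl⟩ := Submodule.mem_sup.mp hw
    obtain ⟨v, rfl⟩ := LinearMap.mem_range.mp hp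
    rw [map_add]
    refine add_mem ?_ ?_
    · -- br z (e v) ∈ I
      have hz : z = (z - e z) + e z := by abel
      rw [hz, A.br_add_left, h8a (hker_sub z) v]
      rw [zero_add]
      exact Submodule.mem_sup_right
        (Submodule.subset_span ⟨z, v, rfl⟩)
    · -- br z s ∈ I for s ∈ S
      have hle : S ≤ Submodule.comap (A.br z) I := by
        rw [hS]
        refine Submodule.span_le.mpr ?_
        rintro w' ⟨x, y, rfl⟩
        have hz : z = (z - e z) + e z := by abel
        have hu : A.br (e x) (e y) = e (A.br (e x) (e y)) +
            (A.br (e x) (e y) - e (A.br (e x) (e y))) := by abel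
        show A.br z (A.br (e x) (e y)) ∈ I
        rw [hz, A.br_add_left, h8c (hker_sub z) x y, zero_add]
        rw [hu, map_add, h8b (hker_sub (A.br (e x) (e y))) z]
        rw [add_zero]
        exact Submodule.mem_sup_right (Submodule.subset_span ⟨z, A.br (e x) (e y), rfl⟩)
      exact hle hs
  have hpiece : ∀ (w : L) (c : Bool), w ∈ A.grade c → w ∈ I →
      w ∈ (I ⊓ A.grade false) ⊔ (I ⊓ A.grade true) := by
    intro w c hwc hwI
    cases c
    · exact Submodule.mem_sup_left ⟨hwI, hwc⟩
    · exact Submodule.mem_sup_right ⟨hwI, hwc⟩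
  have hIgraded : I = (I ⊓ A.grade false) ⊔ (I ⊓ A.grade true) := by
    refine le_antisymm ?_ (sup_le inf_le_left inf_le_left)
    rw [hI]
    refine sup_le ?_ ?_
    · rintro p hp
      obtain ⟨v, rfl⟩ := LinearMap.mem_range.mp hp
      obtain ⟨v0, v1, hv0, hv1, rfl⟩ := A.decompose v
      rw [map_add]
      refine add_mem ?_ ?_
      · exact hpiece _ false (he.1 false v0 hv0)
          (Submodule.mem_sup_left (LinearMap.mem_range.mpr ⟨v0, rfl⟩))
      · exact hpiece _ true (he.1 true v1 hv1)
          (Submodule.mem_sup_left (LinearMap.mem_range.mpr ⟨v1, rfl⟩))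
    · rw [hS]
      refine Submodule.span_le.mpr ?_
      rintro w ⟨x, y, rfl⟩
      obtain ⟨x0, x1, hx0, hx1, rfl⟩ := A.decompose x
      obtain ⟨y0, y1, hy0, hy1, rfl⟩ := A.decompose y
      have hexp : A.br (e (x0 + x1)) (e (y0 + y1)) =
          A.br (e x0) (e y0) + A.br (e x0) (e y1) +
          (A.br (e x1) (e y0) + A.br (e x1) (e y1)) := by
        simp only [map_add, LinearMap.add_apply]
        abel
      rw [hexp]
      have hmem : ∀ (i j : Bool) (xi yj : L), xi ∈ A.grade i → yj ∈ A.grade j →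
          A.br (e xi) (e yj) ∈ (I ⊓ A.grade false) ⊔ (I ⊓ A.grade true) := by
        intro i j xi yj hxi hyj
        exact hpiece _ (xor i j) (A.br_mem i j _ _ (he.1 i xi hxi) (he.1 j yj hyj))
          (Submodule.mem_sup_right (Submodule.subset_span ⟨xi, yj, rfl⟩))
      exact add_mem (add_mem (hmem false false x0 y0 hx0 hy0)
        (hmem false true x0 y1 hx0 hy1))
        (add_mem (hmem true false x1 y0 hx1 hy0) (hmem true true x1 y1 hx1 hy1))
  rcases hA.1 I ⟨hIideal, hIgraded⟩ with hbot | htop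
  · left
    intro v
    have : e v ∈ I := Submodule.mem_sup_left (LinearMap.mem_range.mpr ⟨v, rfl⟩)
    rw [hbot] at this
    exact this
  · right
    have hker0 : ∀ b : L, e b = 0 → b = 0 := by
      intro b hb
      refine A.central_eq_zero hA ?_
      intro z
      have hz : z = (z - e z) + e z := by abel
      rw [hz, A.br_add_left, h8b hb z, add_zero]
      have hbI : b ∈ I := htop ▸ Submodule.mem_top
      rw [hI] at hbI
      obtain ⟨p, hp, s, hs, hps⟩ := Submodule.mem_sup.mp hbI
      obtain ⟨v, rfl⟩ := LinearMap.mem_range.mp hp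
      rw [← hps, map_add, h8a (hker_sub z) v, hbrS (hker_sub z) s hs, add_zero]
    intro x
    have : e (e x - x) = 0 := by rw [map_sub, hidem, sub_self]
    have := hker0 _ this
    rw [sub_eq_zero] at this
    exact this

end Idem

section Poly
variable (A : LieSuperAlgebra F L)

lemma good_one : A.Good (1 : Module.End F L) :=
  ⟨fun a x hx => hx, fun x y => rfl⟩

lemma good_smul (c : F) {g : Module.End F L} (hg : A.Good g) : A.Good (c • g) := by
  constructor
  · intro a x hx
    exact Submodule.smul_mem _ c (hg.1 a x hx)
  · intro x y
    show A.br (c • g x) y = A.br x (c • g y)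
    rw [map_smul, LinearMap.smul_apply, map_smul, hg.2 x y]

lemma good_add {g h : Module.End F L} (hg : A.Good g) (hh : A.Good h) :
    A.Good (g + h) := by
  constructor
  · intro a x hx
    exact add_mem (hg.1 a x hx) (hh.1 a x hx)
  · intro x y
    show A.br (g x + h x) y = A.br x (g y + h y)
    rw [map_add, LinearMap.add_apply, map_add, hg.2 x y, hh.2 x y]

lemma good_sub {g h : Module.End F L} (hg : A.Good g) (hh : A.Good h) :
    A.Good (g - h) := by
  have := A.good_add hg (A.good_smul (-1 : F) hh)
  have heq : g + (-1 : F) • h = g - h := by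
    rw [neg_one_smul]; abel
  rwa [heq] at this

lemma good_pow {g : Module.End F L} (hg : A.Good g) (n : ℕ) : A.Good (g ^ n) := by
  induction n with
  | zero => simpa using A.good_one
  | succ n ih =>
    constructor
    · intro a x hx
      rw [pow_succ, Module.End.mul_apply]
      exact ih.1 a (g x) (hg.1 a x hx)
    · intro x y
      rw [pow_succ, Module.End.mul_apply, ih.2 (g x) y, hg.2 x ((g ^ n) y)]
      congr 1
      calc g ((g ^ n) y) = (g * g ^ n) y := rfl
        _ = (g ^ n * g) y := by rw [← pow_succ', pow_succ]

lemma good_aeval {g : Module.End F L} (hg : A.Good g) (p : F[X]) :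
    A.Good (aeval g p) := by
  induction p using Polynomial.induction_on' with
  | add p q hp hq =>
    rw [map_add]; exact A.good_add hp hq
  | monomial n c =>
    have : (aeval g) (monomial n c) = c • g ^ n := by
      rw [Polynomial.aeval_monomial, Algebra.algebraMap_eq_smul_one,
        smul_mul_assoc, one_mul]
    rw [this]
    exact A.good_smul c (A.good_pow hg n)

lemma good_nilpotent (hA : A.IsSimple) (h2 : (2:F) ≠ 0) :
    ∀ n : ℕ, ∀ g : Module.End F L, A.Good g → g ^ n = 0 → g = 0 := by
  intro n
  induction n using Nat.strong_induction_on with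
  | _ n ih =>
    intro g hg hgn
    match n, hgn with
    | 0, hgn =>
      -- 1 = 0, so every element is 0
      refine LinearMap.ext fun x => ?_
      have hx : x = 0 := by
        have := LinearMap.congr_fun hgn x
        simpa using this
      rw [hx, map_zero, LinearMap.zero_apply]
    | 1, hgn => rw [← pow_one g]; exact hgn
    | (n+2), hgn =>
      have hmlt : (n + 3) / 2 < n + 2 := by omega
      have h2m : n + 2 ≤ (n + 3) / 2 * 2 := by omega
      set m := (n + 3) / 2 with hm
      have hsq : g ^ m * g ^ m = 0 := by
        rw [← pow_add]
        have : m + m = (n + 2) + (m + m - (n + 2)) := by omega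
        rw [this, pow_add, hgn, zero_mul]
      have hgm : A.Good (g ^ m) := A.good_pow hg m
      have hz : ∀ w, (g ^ m) ((g ^ m) w) = 0 := by
        intro w
        have := LinearMap.congr_fun hsq w
        simpa [Module.End.mul_apply] using this
      have : g ^ m = 0 := LinearMap.ext (A.good_sq_zero hA h2 hgm hz)
      exact ih m hmlt g hg this

end Poly

-- polynomial helpers
lemma exists_X_pow_mul_aux (n : ℕ) : ∀ (p : F[X]), p ≠ 0 → p.natDegree ≤ n →
    ∃ k q, p = X ^ k * q ∧ ¬ (X ∣ q) := by
  induction n with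
  | zero =>
    intro p hp hd
    by_cases hX : X ∣ p
    · exfalso
      have h0 : p.coeff 0 = 0 := Polynomial.X_dvd_iff.mp hX
      have hC : p = C (p.coeff 0) := Polynomial.eq_C_of_natDegree_le_zero hd
      rw [h0, map_zero] at hC
      exact hp hC
    · exact ⟨0, p, by rw [pow_zero, one_mul], hX⟩
  | succ n ih =>
    intro p hp hd
    by_cases hX : X ∣ p
    · obtain ⟨r, hr⟩ := hX
      have hr0 : r ≠ 0 := by
        rintro rfl
        rw [mul_zero] at hr
        exact hp hr
      have hdeg : r.natDegree ≤ n := by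
        have hdp : p.natDegree = r.natDegree + 1 := by
          rw [hr, natDegree_mul X_ne_zero hr0, natDegree_X, add_comm]
        omega
      obtain ⟨k, q, hkq, hq⟩ := ih r hr0 hdeg
      exact ⟨k + 1, q, by rw [hr, hkq]; ring, hq⟩
    · exact ⟨0, p, by rw [pow_zero, one_mul], hX⟩

lemma exists_X_pow_mul {p : F[X]} (hp : p ≠ 0) :
    ∃ k q, p = X ^ k * q ∧ ¬ (X ∣ q) :=
  exists_X_pow_mul_aux p.natDegree p hp le_rfl

lemma bezout_X_pow {q : F[X]} (hq : ¬ (X ∣ q)) (k : ℕ) :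
    ∃ a b, a * X ^ k + b * q = 1 := by
  have hc0 : q.coeff 0 ≠ 0 := by
    intro h
    exact hq (Polynomial.X_dvd_iff.mpr h)
  have hCc : C (q.coeff 0)⁻¹ * C (q.coeff 0) = 1 := by
    rw [← C_mul, inv_mul_cancel₀ hc0, C_1]
  have hq' : q.divX * X + C (q.coeff 0) = q := divX_mul_X_add q
  have hIs : IsCoprime (X : F[X]) q :=
    ⟨-(C (q.coeff 0)⁻¹ * q.divX), C (q.coeff 0)⁻¹, by
      linear_combination (-(C (q.coeff 0)⁻¹)) * hq' + hCc⟩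
  obtain ⟨a, b, hab⟩ := hIs.pow_left (m := k)
  exact ⟨a, b, hab⟩


end LieSuperAlgebra

open LieSuperAlgebra

theorem superCommuting_is_scalar
    [IsAlgClosed F] [FiniteDimensional F L] (hchar : ringChar F ≠ 2)
    (A : LieSuperAlgebra F L) (hA : A.IsSimple)
    (f : L →ₗ[F] L) (hEven : A.IsEven f)
    (hcomm : ∀ x y : L, A.br (f x) y = A.br x (f y)) :
    ∃ lam : F, ∀ x : L, f x = lam • x := by
  obtain ⟨x0, y0, hxy0⟩ := hA.2
  haveI : Nontrivial L := by
    refine ⟨⟨x0, 0, ?_⟩⟩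
    rintro rfl
    exact hxy0 (by rw [map_zero, LinearMap.zero_apply])
  have h2 : (2:F) ≠ 0 := Ring.two_ne_zero hchar
  obtain ⟨μ, hμ⟩ := Module.End.exists_eigenvalue (f : Module.End F L)
  obtain ⟨v, hv⟩ := hμ.exists_hasEigenvector
  set h : Module.End F L := f - μ • 1 with hh
  have hgoodf : A.Good f := ⟨hEven, hcomm⟩
  have hgood : A.Good h := A.good_sub hgoodf (A.good_smul μ (A.good_one))
  have hhv : h v = 0 := by
    rw [hh, LinearMap.sub_apply, LinearMap.smul_apply, Module.End.one_apply,
      hv.apply_eq_smul, sub_self]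
  -- minimal polynomial
  haveI : Module.Finite F (Module.End F L) := inferInstance
  have hint : IsIntegral F h := Algebra.IsIntegral.isIntegral (R := F) h
  have hm0 : minpoly F h ≠ 0 := minpoly.ne_zero hint
  have hXdvd : X ∣ minpoly F h := by
    rw [Polynomial.X_dvd_iff]
    have hev : (aeval h (minpoly F h)) v = 0 := by
      rw [minpoly.aeval, LinearMap.zero_apply]
    have hm' : minpoly F h = (minpoly F h).divX * X + C ((minpoly F h).coeff 0) :=
      (divX_mul_X_add (minpoly F h)).symm
    rw [hm'] at hev
    rw [map_add, map_mul, aeval_X, aeval_C] at hev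
    rw [LinearMap.add_apply, Module.End.mul_apply, hhv, map_zero,
      Module.algebraMap_end_apply, zero_add] at hev
    exact (smul_eq_zero.mp hev).resolve_right hv.2
  obtain ⟨k, q, hkq, hXq⟩ := exists_X_pow_mul hm0
  have hk1 : 1 ≤ k := by
    rcases Nat.eq_zero_or_pos k with hk | hk
    · exfalso
      rw [hk, pow_zero, one_mul] at hkq
      exact hXq (hkq ▸ hXdvd)
    · exact hk
  obtain ⟨aP, bP, habP⟩ := bezout_X_pow hXq k
  set e : Module.End F L := aeval h (bP * q) with he
  have hegood : A.Good e := A.good_aeval hgood _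
  have hsum1 : aeval h (aP * X ^ k) + e = 1 := by
    rw [he, ← map_add, habP, map_one]
  have heidem : ∀ w, e (e w) = e w := by
    have hpoly : (bP * q) * (bP * q) - bP * q = (-(bP * aP)) * (X ^ k * q) := by
      linear_combination (bP * q) * habP
    have hee : e * e - e = 0 := by
      rw [he, ← map_mul, ← map_sub, hpoly, map_mul, ← hkq, minpoly.aeval,
        mul_zero]
    have hee' : e * e = e := by rwa [sub_eq_zero] at hee
    intro w
    calc e (e w) = (e * e) w := rfl
      _ = e w := by rw [hee']
  rcases A.good_idem hA hegood heidem with hzero | hid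
  · -- e = 0 : contradiction with eigenvector
    exfalso
    have he0 : e = 0 := LinearMap.ext hzero
    rw [he0, add_zero] at hsum1
    have hvv := LinearMap.congr_fun hsum1 v
    rw [map_mul, aeval_X_pow, Module.End.mul_apply, Module.End.one_apply] at hvv
    obtain ⟨k', rfl⟩ : ∃ k', k = k' + 1 := ⟨k - 1, by omega⟩
    rw [pow_succ, Module.End.mul_apply, hhv, map_zero, map_zero] at hvv
    exact hv.2 hvv.symm
  · -- e = 1 : h is nilpotent
    have he1 : e = 1 := LinearMap.ext fun w => by rw [hid w, Module.End.one_apply]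
    have haz : aeval h (aP * X ^ k) = 0 := by
      rw [he1] at hsum1
      have := hsum1
      rwa [add_eq_right] at this
    have hdvd : minpoly F h ∣ aP * X ^ k := minpoly.dvd F h haz
    rw [hkq, mul_comm aP (X ^ k)] at hdvd
    have hqa : q ∣ aP :=
      (mul_dvd_mul_iff_left (pow_ne_zero k Polynomial.X_ne_zero)).mp hdvd
    obtain ⟨c, hc⟩ := hqa
    have hq1 : IsUnit q := by
      refine IsUnit.of_mul_eq_one (a := q) (c * X ^ k + bP) ?_
      have : q * (c * X ^ k + bP) = aP * X ^ k + bP * q := by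
        rw [hc]; ring
      rw [this, habP]
    obtain ⟨u, hu, hCq⟩ := Polynomial.isUnit_iff.mp hq1
    have hu0 : u ≠ 0 := hu.ne_zero
    have hnil : h ^ k = 0 := by
      have h0 : (0 : Module.End F L) = aeval h (minpoly F h) :=
        (minpoly.aeval F h).symm
      rw [hkq, ← hCq, map_mul, aeval_X_pow, aeval_C] at h0
      have : (0 : Module.End F L) = u • h ^ k := by
        rw [h0, Algebra.algebraMap_eq_smul_one, mul_smul_comm, mul_one]
      exact ((smul_eq_zero.mp this.symm).resolve_left hu0)
    have hh0 : h = 0 := A.good_nilpotent hA h2 k h hgood hnil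
    refine ⟨μ, fun x => ?_⟩
    have := LinearMap.congr_fun hh0 x
    rw [hh, LinearMap.sub_apply, LinearMap.smul_apply, Module.End.one_apply,
      LinearMap.zero_apply, sub_eq_zero] at this
    exact this
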